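/- The sum sin(2π/7) + sin(4π/7) + sin(8π/7) equals √7/2. -/
import Mathlib


open Real

theorem sin_sum_seventh :
    Real.sin (2 * Real.pi / 7) + Real.sin (4 * Real.pi / 7) + Real.sin (8 * Real.pi / 7)
      = Real.sqrt 7 / 2 := by
  set x : ℝ := Real.pi / 7 with hxdef
  set s : ℝ := Real.sin x with hs
  set c : ℝ := Real.cos x with hc
  have hxpos : 0 < x := by positivity
  have hxlt : x < Real.pi := by
    rw [hxdef]; nlinarith [Real.pi_pos]
  have hspos : 0 < s := Real.sin_pos_of_pos_of_lt_pi hxpos hxlt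
  -- double angle facts
  have s2 : Real.sin (2 * x) = 2 * s * c := Real.sin_two_mul x
  have c2 : Real.cos (2 * x) = 2 * c ^ 2 - 1 := by
    rw [Real.cos_two_mul x]
  have s4 : Real.sin (4 * x) = 2 * Real.sin (2 * x) * Real.cos (2 * x) := by
    rw [show (4 : ℝ) * x = 2 * (2 * x) by ring, Real.sin_two_mul]
  have c4 : Real.cos (4 * x) = 2 * Real.cos (2 * x) ^ 2 - 1 := by
    rw [show (4 : ℝ) * x = 2 * (2 * x) by ring, Real.cos_two_mul]
  have s8 : Real.sin (8 * x) = 2 * Real.sin (4 * x) * Real.cos (4 * x) := by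
    rw [show (8 : ℝ) * x = 2 * (4 * x) by ring, Real.sin_two_mul]
  have c8 : Real.cos (8 * x) = 2 * Real.cos (4 * x) ^ 2 - 1 := by
    rw [show (8 : ℝ) * x = 2 * (4 * x) by ring, Real.cos_two_mul]
  -- sin(7x) = 0
  have h7 : Real.sin (7 * x) = 0 := by
    rw [show (7 : ℝ) * x = Real.pi by rw [hxdef]; ring, Real.sin_pi]
  have h7' : Real.sin (7 * x) = Real.sin (8 * x) * c - Real.cos (8 * x) * s := by
    rw [show (7 : ℝ) * x = 8 * x - x by ring, Real.sin_sub]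
  -- the minimal polynomial relation for c
  have hP : 64 * c ^ 6 - 80 * c ^ 4 + 24 * c ^ 2 - 1 = 0 := by
    have h0 : s * (64 * c ^ 6 - 80 * c ^ 4 + 24 * c ^ 2 - 1) = 0 := by
      rw [← h7, h7', s8, s4, s2, c8, c4, c2]; ring
    rcases mul_eq_zero.mp h0 with h | h
    · exact absurd h (ne_of_gt hspos)
    · exact h
  have hsq : s ^ 2 + c ^ 2 = 1 := Real.sin_sq_add_cos_sq x
  -- the sum S
  have hSrw : Real.sin (2 * Real.pi / 7) + Real.sin (4 * Real.pi / 7)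
      + Real.sin (8 * Real.pi / 7)
      = Real.sin (2 * x) + Real.sin (4 * x) + Real.sin (8 * x) := by
    rw [hxdef]; norm_num [mul_div_assoc]
  have hSW : Real.sin (2 * x) + Real.sin (4 * x) + Real.sin (8 * x)
      = s * (128 * c ^ 7 - 192 * c ^ 5 + 88 * c ^ 3 - 10 * c) := by
    rw [s8, s4, s2, c4, c2]; ring
  set S : ℝ := Real.sin (2 * x) + Real.sin (4 * x) + Real.sin (8 * x) with hSdef
  have hS2 : S ^ 2 = 7 / 4 := by
    rw [hSW]
    linear_combination (-256 * c ^ 10 + 704 * c ^ 8 - 720 * c ^ 6 + 328 * c ^ 4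
        - 58 * c ^ 2 + 7 / 4) * hP
      + (128 * c ^ 7 - 192 * c ^ 5 + 88 * c ^ 3 - 10 * c) ^ 2 * hsq
  -- positivity of S
  have h8neg : Real.sin (8 * x) = -s := by
    rw [show (8 : ℝ) * x = Real.pi + x by rw [hxdef]; ring, Real.sin_add]
    simp [hs]
  have h4eq : Real.sin (4 * x) = Real.sin (3 * x) := by
    rw [show (3 : ℝ) * x = Real.pi - 4 * x by rw [hxdef]; ring, Real.sin_pi_sub]
  have h3gt : s < Real.sin (3 * x) := by
    apply Real.sin_lt_sin_of_lt_of_le_pi_div_two (by linarith) ?_ (by linarith)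
    rw [hxdef]; nlinarith [Real.pi_pos]
  have h2pos : 0 < Real.sin (2 * x) := by
    apply Real.sin_pos_of_pos_of_lt_pi (by linarith)
    rw [hxdef]; nlinarith [Real.pi_pos]
  have hSpos : 0 < S := by
    rw [hSdef, h8neg, h4eq]; linarith
  -- conclude
  rw [hSrw]
  have hsq7 : Real.sqrt 7 ^ 2 = 7 := Real.sq_sqrt (by norm_num)
  have h7nn : 0 ≤ Real.sqrt 7 := Real.sqrt_nonneg 7
  have key : (S - Real.sqrt 7 / 2) * (S + Real.sqrt 7 / 2) = 0 := by
    linear_combination hS2 - (1 / 4) * hsq7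
  rcases mul_eq_zero.mp key with h | h
  · linarith
  · exfalso; linarith
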